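/- arXiv:1402.3665 — 3 statements merged into one kernel-verified Lean document; each statement's English description precedes it below -/
import Mathlib

section
/- The R-matrix satisfies the quadratic relation Ř² = (1 − r s^{-1}) Ř + (r s^{-1}) Id on V ⊗ V. -/
open Matrix Kronecker BigOperators

set_option maxRecDepth 4000 in
private lemma sum_diag_apply (n : ℕ) (p q : Fin n × Fin n) :
    (∑ i : Fin n, Matrix.single i i (1:ℂ) ⊗ₖ Matrix.single i i (1:ℂ)) p q
      = if p.1 = p.2 ∧ q = p then 1 else 0 := by
  obtain ⟨a,b⟩ := p; obtain ⟨c,d⟩ := q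
  simp only [Matrix.sum_apply, kroneckerMap_apply, Matrix.single, of_apply, ite_mul, mul_ite,
    one_mul, mul_one, mul_zero, zero_mul]
  rw [Finset.sum_eq_single a]
  · split_ifs <;> first | rfl |
      (exfalso; casesm* _ ∧ _ <;> simp_all [Prod.ext_iff])
  · intro i _ hi; split_ifs <;> first | rfl |
      (exfalso; casesm* _ ∧ _ <;> simp_all [Prod.ext_iff])
  · simp

set_option maxRecDepth 4000 in
private lemma sum_lower_apply (n : ℕ) (p q : Fin n × Fin n) :
    (∑ i : Fin n, ∑ j : Fin n,
        if i < j then Matrix.single j i (1:ℂ) ⊗ₖ Matrix.single i j (1:ℂ) else 0) p q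
      = if p.2 < p.1 ∧ q = (p.2, p.1) then 1 else 0 := by
  obtain ⟨a,b⟩ := p; obtain ⟨c,d⟩ := q
  simp only [Matrix.sum_apply,
    apply_ite (fun M : Matrix (Fin n × Fin n) (Fin n × Fin n) ℂ => M (a,b) (c,d)),
    Matrix.zero_apply, kroneckerMap_apply, Matrix.single,
    of_apply, ite_mul, mul_ite, one_mul, mul_one, mul_zero, zero_mul]
  rw [Finset.sum_eq_single b]
  · rw [Finset.sum_eq_single a]
    · split_ifs <;> first | rfl |
        (exfalso; casesm* _ ∧ _ <;> simp_all [Prod.ext_iff])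
    · intro j _ hj; split_ifs <;> first | rfl |
        (exfalso; casesm* _ ∧ _ <;> simp_all [Prod.ext_iff])
    · simp
  · intro i _ hi
    rw [Finset.sum_eq_single a]
    · split_ifs <;> first | rfl |
        (exfalso; casesm* _ ∧ _ <;> simp_all [Prod.ext_iff])
    · intro j _ hj; split_ifs <;> first | rfl |
        (exfalso; casesm* _ ∧ _ <;> simp_all [Prod.ext_iff])
    · simp
  · simp

set_option maxRecDepth 4000 in
private lemma sum_upper_apply (n : ℕ) (p q : Fin n × Fin n) :
    (∑ i : Fin n, ∑ j : Fin n,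
        if i < j then Matrix.single i j (1:ℂ) ⊗ₖ Matrix.single j i (1:ℂ) else 0) p q
      = if p.1 < p.2 ∧ q = (p.2, p.1) then 1 else 0 := by
  obtain ⟨a,b⟩ := p; obtain ⟨c,d⟩ := q
  simp only [Matrix.sum_apply,
    apply_ite (fun M : Matrix (Fin n × Fin n) (Fin n × Fin n) ℂ => M (a,b) (c,d)),
    Matrix.zero_apply, kroneckerMap_apply, Matrix.single,
    of_apply, ite_mul, mul_ite, one_mul, mul_one, mul_zero, zero_mul]
  rw [Finset.sum_eq_single a]
  · rw [Finset.sum_eq_single b]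
    · split_ifs <;> first | rfl |
        (exfalso; casesm* _ ∧ _ <;> simp_all [Prod.ext_iff])
    · intro j _ hj; split_ifs <;> first | rfl |
        (exfalso; casesm* _ ∧ _ <;> simp_all [Prod.ext_iff])
    · simp
  · intro i _ hi
    rw [Finset.sum_eq_single b]
    · split_ifs <;> first | rfl |
        (exfalso; casesm* _ ∧ _ <;> simp_all [Prod.ext_iff])
    · intro j _ hj; split_ifs <;> first | rfl |
        (exfalso; casesm* _ ∧ _ <;> simp_all [Prod.ext_iff])
    · simp
  · simp

set_option maxRecDepth 4000 in
private lemma sum_diag2_apply (n : ℕ) (p q : Fin n × Fin n) :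
    (∑ i : Fin n, ∑ j : Fin n,
        if i < j then Matrix.single j j (1:ℂ) ⊗ₖ Matrix.single i i (1:ℂ) else 0) p q
      = if p.2 < p.1 ∧ q = p then 1 else 0 := by
  obtain ⟨a,b⟩ := p; obtain ⟨c,d⟩ := q
  simp only [Matrix.sum_apply,
    apply_ite (fun M : Matrix (Fin n × Fin n) (Fin n × Fin n) ℂ => M (a,b) (c,d)),
    Matrix.zero_apply, kroneckerMap_apply, Matrix.single,
    of_apply, ite_mul, mul_ite, one_mul, mul_one, mul_zero, zero_mul]
  rw [Finset.sum_eq_single b]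
  · rw [Finset.sum_eq_single a]
    · split_ifs <;> first | rfl |
        (exfalso; casesm* _ ∧ _ <;> simp_all [Prod.ext_iff])
    · intro j _ hj; split_ifs <;> first | rfl |
        (exfalso; casesm* _ ∧ _ <;> simp_all [Prod.ext_iff])
    · simp
  · intro i _ hi
    rw [Finset.sum_eq_single a]
    · split_ifs <;> first | rfl |
        (exfalso; casesm* _ ∧ _ <;> simp_all [Prod.ext_iff])
    · intro j _ hj; split_ifs <;> first | rfl |
        (exfalso; casesm* _ ∧ _ <;> simp_all [Prod.ext_iff])
    · simp
  · simp


/-- The two-parameter R-matrix `Ř` on `V ⊗ V`, `V = ℂⁿ`, written in the basis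
`v_i ⊗ v_j ↔ (i,j)`:
`Ř = Σᵢ Eᵢᵢ⊗Eᵢᵢ + r Σ_{i<j} Eⱼᵢ⊗Eᵢⱼ + s⁻¹ Σ_{i<j} Eᵢⱼ⊗Eⱼᵢ + (1 − r s⁻¹) Σ_{i<j} Eⱼⱼ⊗Eᵢᵢ`. -/
noncomputable def Rhat (n : ℕ) (r s : ℂ) : Matrix (Fin n × Fin n) (Fin n × Fin n) ℂ :=
  (∑ i : Fin n, Matrix.single i i (1:ℂ) ⊗ₖ Matrix.single i i (1:ℂ))
  + r • (∑ i : Fin n, ∑ j : Fin n,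
      if i < j then Matrix.single j i (1:ℂ) ⊗ₖ Matrix.single i j (1:ℂ) else 0)
  + s⁻¹ • (∑ i : Fin n, ∑ j : Fin n,
      if i < j then Matrix.single i j (1:ℂ) ⊗ₖ Matrix.single j i (1:ℂ) else 0)
  + (1 - r * s⁻¹) • (∑ i : Fin n, ∑ j : Fin n,
      if i < j then Matrix.single j j (1:ℂ) ⊗ₖ Matrix.single i i (1:ℂ) else 0)

/-- Given an operator `M` on `V ⊗ V`, the operator on `V^{⊗m}` acting as `M` in the
tensor factors `(a, b)` (with `a ≠ b`) and as the identity in all other factors.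
Here `V^{⊗m}` is identified with `(Fin m → Fin n) → ℂ` via the basis
`v_{f 0} ⊗ ⋯ ⊗ v_{f (m-1)} ↔ f`. -/
noncomputable def op2At (n m : ℕ) (M : Matrix (Fin n × Fin n) (Fin n × Fin n) ℂ)
    (a b : Fin m) : Matrix (Fin m → Fin n) (Fin m → Fin n) ℂ :=
  fun f g => M (f a, f b) (g a, g b) *
    ∏ l ∈ Finset.univ \ ({a, b} : Finset (Fin m)), (if f l = g l then (1:ℂ) else 0)

private lemma Rhat_apply (n : ℕ) (r s : ℂ) (p q : Fin n × Fin n) :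
    Rhat n r s p q =
      (if p.1 = p.2 ∧ q = p then 1 else 0)
      + r * (if p.2 < p.1 ∧ q = (p.2, p.1) then 1 else 0)
      + s⁻¹ * (if p.1 < p.2 ∧ q = (p.2, p.1) then 1 else 0)
      + (1 - r * s⁻¹) * (if p.2 < p.1 ∧ q = p then 1 else 0) := by
  simp only [Rhat, Matrix.add_apply, Matrix.smul_apply, smul_eq_mul,
    sum_diag_apply, sum_lower_apply, sum_upper_apply, sum_diag2_apply]


set_option maxRecDepth 8000 in
/-- **Quadratic (Hecke) relation.** `Ř² = (1 − r s⁻¹) Ř + (r s⁻¹) Id` on `V ⊗ V`. -/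
theorem Rhat_quadratic (n : ℕ) (hn : 1 ≤ n) (r s : ℂ) (hr : r ≠ 0) (hs : s ≠ 0) :
    Rhat n r s * Rhat n r s = (1 - r * s⁻¹) • Rhat n r s + (r * s⁻¹) • (1 : Matrix (Fin n × Fin n) (Fin n × Fin n) ℂ) := by
  ext p q
  obtain ⟨a, b⟩ := p
  obtain ⟨e, f⟩ := q
  rw [Matrix.mul_apply, Matrix.add_apply, Matrix.smul_apply, Matrix.smul_apply, smul_eq_mul,
    smul_eq_mul, Matrix.one_apply]
  rcases lt_trichotomy a b with h | h | h
  · -- a < b : row is s⁻¹ at (b,a)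
    have row : ∀ x, Rhat n r s (a, b) x = s⁻¹ * (if x = (b, a) then 1 else 0) := by
      intro x
      rw [Rhat_apply]
      simp [h.ne, not_lt.2 h.le, h]
    calc ∑ x, Rhat n r s (a, b) x * Rhat n r s x (e, f)
        = ∑ x, (if x = (b, a) then s⁻¹ * Rhat n r s x (e, f) else 0) := by
          refine Finset.sum_congr rfl fun x _ => ?_
          rw [row]; split_ifs <;> ring
      _ = s⁻¹ * Rhat n r s (b, a) (e, f) := by
          rw [Finset.sum_ite_eq']
          simp only [Finset.mem_univ, if_true]
      _ = _ := by
          clear row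
          simp only [Rhat_apply, Prod.mk.injEq]
          simp only [h.ne, h.ne', h, not_lt.2 h.le, lt_irrefl, if_true, if_false, false_and,
            and_false, true_and, and_true]
          split_ifs <;>
            first
              | ring1
              | (exfalso; casesm* _ ∧ _
                 subst_vars
                 simp_all)
  · -- a = b : row is 1 at (a,a)
    subst h
    have row : ∀ x, Rhat n r s (a, a) x = (if x = (a, a) then 1 else 0) := by
      intro x
      rw [Rhat_apply]
      simp
    calc ∑ x, Rhat n r s (a, a) x * Rhat n r s x (e, f)
        = ∑ x, (if x = (a, a) then Rhat n r s x (e, f) else 0) := by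
          refine Finset.sum_congr rfl fun x _ => ?_
          rw [row]; split_ifs <;> ring
      _ = Rhat n r s (a, a) (e, f) := by
          rw [Finset.sum_ite_eq']
          simp only [Finset.mem_univ, if_true]
      _ = _ := by
          clear row
          simp only [Rhat_apply, Prod.mk.injEq]
          simp only [lt_irrefl, false_and, and_false, if_false, if_true, true_and]
          split_ifs <;>
            first
              | ring1
              | (exfalso; casesm* _ ∧ _
                 subst_vars
                 simp_all)
  · -- b < a : row is r at (b,a) and (1 - r s⁻¹) at (a,b)
    have row : ∀ x, Rhat n r s (a, b) x =
        r * (if x = (b, a) then 1 else 0) + (1 - r * s⁻¹) * (if x = (a, b) then 1 else 0) := by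
      intro x
      rw [Rhat_apply]
      simp [h.ne', not_lt.2 h.le, h]
    calc ∑ x, Rhat n r s (a, b) x * Rhat n r s x (e, f)
        = ∑ x, ((if x = (b, a) then r * Rhat n r s x (e, f) else 0)
            + (if x = (a, b) then (1 - r * s⁻¹) * Rhat n r s x (e, f) else 0)) := by
          refine Finset.sum_congr rfl fun x _ => ?_
          rw [row]; split_ifs <;>
            first
              | ring1
              | (exfalso; casesm* _ ∧ _
                 subst_vars
                 simp_all [Prod.ext_iff])
      _ = r * Rhat n r s (b, a) (e, f) + (1 - r * s⁻¹) * Rhat n r s (a, b) (e, f) := by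
          rw [Finset.sum_add_distrib, Finset.sum_ite_eq', Finset.sum_ite_eq']
          simp only [Finset.mem_univ, if_true]
      _ = _ := by
          clear row
          simp only [Rhat_apply, Prod.mk.injEq]
          simp only [h.ne, h.ne', h, not_lt.2 h.le, lt_irrefl, if_true, if_false, false_and,
            and_false, true_and, and_true]
          split_ifs <;>
            first
              | ring1
              | (exfalso; casesm* _ ∧ _
                 subst_vars
                 simp_all)
end

section
/- Let x, y, z be pairwise distinct nonzero complex numbers. Then the normalized two-spectral-parameter R-matrix satisfies Ř_1(x,y) Ř_2(x,z) Ř_1(y,z) = Ř_2(y,z) Ř_1(x,z) Ř_2(x,y) as operators on V ⊗ V ⊗ V, where Ř_1(x,y) = Ř(x,y) ⊗ Id and Ř_2(x,y) = Id ⊗ Ř(x,y). -/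
open Matrix Kronecker BigOperators

/-- The spectral-parameter R-matrix `Ř(z)` on `V ⊗ V`:
`Ř(z) = (1 − z r s⁻¹) Σᵢ Eᵢᵢ⊗Eᵢᵢ + (1 − z)(r Σ_{i>j} + s⁻¹ Σ_{i<j}) Eᵢⱼ⊗Eⱼᵢ
 + z(1 − r s⁻¹) Σ_{i<j} Eᵢᵢ⊗Eⱼⱼ + (1 − r s⁻¹) Σ_{i>j} Eᵢᵢ⊗Eⱼⱼ`. -/
noncomputable def RhatZ (n : ℕ) (r s z : ℂ) : Matrix (Fin n × Fin n) (Fin n × Fin n) ℂ :=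
  (1 - z * (r * s⁻¹)) • (∑ i : Fin n, Matrix.single i i (1:ℂ) ⊗ₖ Matrix.single i i (1:ℂ))
  + (1 - z) • (r • (∑ i : Fin n, ∑ j : Fin n,
        if j < i then Matrix.single i j (1:ℂ) ⊗ₖ Matrix.single j i (1:ℂ) else 0)
      + s⁻¹ • (∑ i : Fin n, ∑ j : Fin n,
        if i < j then Matrix.single i j (1:ℂ) ⊗ₖ Matrix.single j i (1:ℂ) else 0))
  + (z * (1 - r * s⁻¹)) • (∑ i : Fin n, ∑ j : Fin n,
      if i < j then Matrix.single i i (1:ℂ) ⊗ₖ Matrix.single j j (1:ℂ) else 0)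
  + (1 - r * s⁻¹) • (∑ i : Fin n, ∑ j : Fin n,
      if j < i then Matrix.single i i (1:ℂ) ⊗ₖ Matrix.single j j (1:ℂ) else 0)

/-- The normalized two-spectral-parameter R-matrix `Ř(x,y) = (s y / (y − x)) · Ř(x/y)`. -/
noncomputable def RhatXY (n : ℕ) (r s x y : ℂ) : Matrix (Fin n × Fin n) (Fin n × Fin n) ℂ :=
  (s * y / (y - x)) • RhatZ n r s (x / y)

namespace YBaux
variable {n : ℕ}

noncomputable def cA (r s : ℂ) {n : ℕ} (p q : Fin n) : ℂ :=
  if p = q then 1 else if p < q then s⁻¹ else r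

noncomputable def cB (r s : ℂ) {n : ℕ} (p q : Fin n) : ℂ :=
  if q < p then 1 - r * s⁻¹ else 0

noncomputable def Rent (r s : ℂ) {n : ℕ} (p q c d : Fin n) : ℂ :=
  (if c = q then (1:ℂ) else 0) * (if d = p then (1:ℂ) else 0) * cA r s p q
  + (if c = p then (1:ℂ) else 0) * (if d = q then (1:ℂ) else 0) * cB r s p q

lemma cA_eq (r s : ℂ) (p : Fin n) : cA r s p p = 1 := by simp [cA]
lemma cA_lt (r s : ℂ) {p q : Fin n} (h : p < q) : cA r s p q = s⁻¹ := by
  simp [cA, h, h.ne]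
lemma cA_gt (r s : ℂ) {p q : Fin n} (h : q < p) : cA r s p q = r := by
  simp [cA, h.ne', asymm h]
lemma cB_eq (r s : ℂ) (p : Fin n) : cB r s p p = 0 := by simp [cB]
lemma cB_lt (r s : ℂ) {p q : Fin n} (h : p < q) : cB r s p q = 0 := by
  simp [cB, asymm h]
lemma cB_gt (r s : ℂ) {p q : Fin n} (h : q < p) : cB r s p q = 1 - r * s⁻¹ := by
  simp [cB, h]

lemma sum1 (F : Fin n → ℂ) (a : Fin n) (h : ∀ i, i ≠ a → F i = 0) : ∑ i, F i = F a :=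
  Finset.sum_eq_single a (fun b _ hb => h b hb) (by simp)

lemma sum2 (F : Fin n → Fin n → ℂ) (a b : Fin n) (h : ∀ i j, F i j ≠ 0 → i = a ∧ j = b) :
    ∑ i, ∑ j, F i j = F a b := by
  rw [sum1 (fun i => ∑ j, F i j) a (fun i hi => Finset.sum_eq_zero (fun j _ => by
    by_contra hF; exact hi (h i j hF).1))]
  exact sum1 (F a) b (fun j hj => by by_contra hF; exact hj (h a j hF).2)

lemma std_apply (i j a b : Fin n) : Matrix.single i j (1:ℂ) a b
    = (if a = i then (1:ℂ) else 0) * (if b = j then (1:ℂ) else 0) := by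
  simp only [Matrix.single, Matrix.of_apply]
  by_cases h1 : a = i <;> by_cases h2 : b = j <;>
    [skip; skip; skip; skip] <;> subst_eqs <;> simp_all [eq_comm]

lemma Rhat_apply (r s : ℂ) (p q c d : Fin n) :
    Rhat n r s (p, q) (c, d) = Rent r s p q c d := by
  have e1 : (∑ i : Fin n, Matrix.single i i (1:ℂ) p c * Matrix.single i i (1:ℂ) q d)
      = Matrix.single p p (1:ℂ) p c * Matrix.single p p (1:ℂ) q d := by
    refine sum1 _ p (fun i hi => ?_); simp [Matrix.single, hi]
  have e2 : (∑ i : Fin n, ∑ j : Fin n, if i < j then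
        Matrix.single j i (1:ℂ) p c * Matrix.single i j (1:ℂ) q d else 0)
      = (if q < p then Matrix.single p q (1:ℂ) p c * Matrix.single q p (1:ℂ) q d else 0) := by
    refine sum2 _ q p (fun i j hF => ?_)
    by_contra hcon
    apply hF
    rcases not_and_or.mp hcon with h' | h' <;>
      · split_ifs with hij
        · simp [Matrix.single, h', Ne.symm]
        · rfl
  have e3 : (∑ i : Fin n, ∑ j : Fin n, if i < j then
        Matrix.single i j (1:ℂ) p c * Matrix.single j i (1:ℂ) q d else 0)
      = (if p < q then Matrix.single p q (1:ℂ) p c * Matrix.single q p (1:ℂ) q d else 0) := by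
    refine sum2 _ p q (fun i j hF => ?_)
    by_contra hcon
    apply hF
    rcases not_and_or.mp hcon with h' | h' <;>
      · split_ifs with hij
        · simp [Matrix.single, h', Ne.symm]
        · rfl
  have e4 : (∑ i : Fin n, ∑ j : Fin n, if i < j then
        Matrix.single j j (1:ℂ) p c * Matrix.single i i (1:ℂ) q d else 0)
      = (if q < p then Matrix.single p p (1:ℂ) p c * Matrix.single q q (1:ℂ) q d else 0) := by
    refine sum2 _ q p (fun i j hF => ?_)
    by_contra hcon
    apply hF
    rcases not_and_or.mp hcon with h' | h' <;>
      · split_ifs with hij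
        · simp [Matrix.single, h', Ne.symm]
        · rfl
  have hite : ∀ (P : Prop) [Decidable P] (M : Matrix (Fin n × Fin n) (Fin n × Fin n) ℂ),
      (if P then M else 0) (p, q) (c, d) = if P then M (p, q) (c, d) else 0 := by
    intro P _ M; split_ifs <;> rfl
  simp only [Rhat, Matrix.add_apply, Matrix.smul_apply, Matrix.sum_apply,
    Matrix.kroneckerMap_apply, smul_eq_mul, Matrix.zero_apply, hite]
  rw [e1, e2, e3, e4]
  simp only [std_apply, Rent, cA, cB, if_pos rfl, one_mul, mul_one]
  rcases lt_trichotomy p q with h | rfl | h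
  · simp only [h, h.ne, h.ne', asymm h, if_true, if_false, ite_true, ite_false, not_false_iff]
    split_ifs <;> ring
  · simp only [lt_irrefl, if_false, ite_false, if_pos rfl, ite_true]
    split_ifs <;> ring
  · simp only [h, h.ne, h.ne', asymm h, if_true, if_false, ite_true, ite_false]
    split_ifs <;> ring

lemma RhatZ_apply (r s z : ℂ) (p q c d : Fin n) :
    RhatZ n r s z (p, q) (c, d) = (1 - z) * Rent r s p q c d
      + (z * (1 - r * s⁻¹)) * ((if c = p then (1:ℂ) else 0) * (if d = q then (1:ℂ) else 0)) := by
  have e1 : (∑ i : Fin n, Matrix.single i i (1:ℂ) p c * Matrix.single i i (1:ℂ) q d)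
      = Matrix.single p p (1:ℂ) p c * Matrix.single p p (1:ℂ) q d := by
    refine sum1 _ p (fun i hi => ?_); simp [Matrix.single, hi]
  have e2 : (∑ i : Fin n, ∑ j : Fin n, if j < i then
        Matrix.single i j (1:ℂ) p c * Matrix.single j i (1:ℂ) q d else 0)
      = (if q < p then Matrix.single p q (1:ℂ) p c * Matrix.single q p (1:ℂ) q d else 0) := by
    refine sum2 _ p q (fun i j hF => ?_)
    by_contra hcon
    apply hF
    rcases not_and_or.mp hcon with h' | h' <;>
      · split_ifs with hij
        · simp [Matrix.single, h', Ne.symm]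
        · rfl
  have e3 : (∑ i : Fin n, ∑ j : Fin n, if i < j then
        Matrix.single i j (1:ℂ) p c * Matrix.single j i (1:ℂ) q d else 0)
      = (if p < q then Matrix.single p q (1:ℂ) p c * Matrix.single q p (1:ℂ) q d else 0) := by
    refine sum2 _ p q (fun i j hF => ?_)
    by_contra hcon
    apply hF
    rcases not_and_or.mp hcon with h' | h' <;>
      · split_ifs with hij
        · simp [Matrix.single, h', Ne.symm]
        · rfl
  have e4 : (∑ i : Fin n, ∑ j : Fin n, if i < j then
        Matrix.single i i (1:ℂ) p c * Matrix.single j j (1:ℂ) q d else 0)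
      = (if p < q then Matrix.single p p (1:ℂ) p c * Matrix.single q q (1:ℂ) q d else 0) := by
    refine sum2 _ p q (fun i j hF => ?_)
    by_contra hcon
    apply hF
    rcases not_and_or.mp hcon with h' | h' <;>
      · split_ifs with hij
        · simp [Matrix.single, h', Ne.symm]
        · rfl
  have e5 : (∑ i : Fin n, ∑ j : Fin n, if j < i then
        Matrix.single i i (1:ℂ) p c * Matrix.single j j (1:ℂ) q d else 0)
      = (if q < p then Matrix.single p p (1:ℂ) p c * Matrix.single q q (1:ℂ) q d else 0) := by
    refine sum2 _ p q (fun i j hF => ?_)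
    by_contra hcon
    apply hF
    rcases not_and_or.mp hcon with h' | h' <;>
      · split_ifs with hij
        · simp [Matrix.single, h', Ne.symm]
        · rfl
  have hite : ∀ (P : Prop) [Decidable P] (M : Matrix (Fin n × Fin n) (Fin n × Fin n) ℂ),
      (if P then M else 0) (p, q) (c, d) = if P then M (p, q) (c, d) else 0 := by
    intro P _ M; split_ifs <;> rfl
  simp only [RhatZ, Matrix.add_apply, Matrix.smul_apply, Matrix.sum_apply,
    Matrix.kroneckerMap_apply, smul_eq_mul, Matrix.zero_apply, hite]
  rw [e1, e2, e3, e4, e5]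
  simp only [std_apply, Rent, cA, cB, if_pos rfl, one_mul, mul_one]
  rcases lt_trichotomy p q with h | rfl | h
  · simp only [h, h.ne, h.ne', asymm h, if_true, if_false, ite_true, ite_false, not_false_iff]
    split_ifs <;> ring
  · simp only [lt_irrefl, if_false, ite_false, if_pos rfl, ite_true]
    split_ifs <;> ring
  · simp only [h, h.ne, h.ne', asymm h, if_true, if_false, ite_true, ite_false]
    split_ifs <;> ring

lemma RhatZ_eq (r s z : ℂ) :
    RhatZ n r s z = (1 - z) • Rhat n r s + (z * (1 - r * s⁻¹)) • 1 := by
  ext ⟨p, q⟩ ⟨c, d⟩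
  rw [RhatZ_apply, Matrix.add_apply, Matrix.smul_apply, Matrix.smul_apply, Rhat_apply,
    Matrix.one_apply]
  simp only [smul_eq_mul, Prod.mk.injEq]
  congr 1
  by_cases h1 : c = p <;> by_cases h2 : d = q <;> subst_eqs <;> split_ifs <;>
    first | ring1 | rfl | simp_all | (exfalso; omega)

lemma innerE (r s : ℂ) (b k p a l m : Fin n) :
    ∑ e : Fin n, Rent r s b k e p * Rent r s a e l m
      = (if p = b then (1:ℂ) else 0) * cA r s b k * Rent r s a k l m
        + (if p = k then (1:ℂ) else 0) * cB r s b k * Rent r s a b l m := by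
  simp only [Rent, add_mul]
  rw [Finset.sum_add_distrib]
  congr 1
  · rw [sum1 _ k (fun e he => by simp [he])]
    simp [Rent, mul_assoc, mul_left_comm, mul_comm]
  · rw [sum1 _ b (fun e he => by simp [he])]
    simp [Rent, mul_assoc, mul_left_comm, mul_comm]

lemma innerE2 (r s : ℂ) (i b l c m p : Fin n) :
    ∑ e : Fin n, Rent r s i b l e * Rent r s e c m p
      = (if l = b then (1:ℂ) else 0) * cA r s i b * Rent r s i c m p
        + (if l = i then (1:ℂ) else 0) * cB r s i b * Rent r s b c m p := by
  have : ∀ e : Fin n, Rent r s i b l e * Rent r s e c m p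
      = ((if e = i then (1:ℂ) else 0) * (if l = b then (1:ℂ) else 0) * cA r s i b
        + (if e = b then (1:ℂ) else 0) * (if l = i then (1:ℂ) else 0) * cB r s i b)
          * Rent r s e c m p := by
    intro e
    simp only [Rent]
    ring_nf
  simp only [this, add_mul]
  rw [Finset.sum_add_distrib]
  congr 1
  · rw [sum1 _ i (fun e he => by simp [he])]
    simp [mul_assoc, mul_left_comm, mul_comm]
  · rw [sum1 _ b (fun e he => by simp [he])]
    simp [mul_assoc, mul_left_comm, mul_comm]

lemma outer2 (r s : ℂ) (i j : Fin n) (H : Fin n → Fin n → ℂ) :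
    ∑ a : Fin n, ∑ b : Fin n, Rent r s i j a b * H a b
      = cA r s i j * H j i + cB r s i j * H i j := by
  simp only [Rent, add_mul]
  have split : ∀ a, (∑ b, ((if a = j then (1:ℂ) else 0) * (if b = i then (1:ℂ) else 0) * cA r s i j * H a b
      + (if a = i then (1:ℂ) else 0) * (if b = j then (1:ℂ) else 0) * cB r s i j * H a b)) =
      (∑ b, (if a = j then (1:ℂ) else 0) * (if b = i then (1:ℂ) else 0) * cA r s i j * H a b)
      + (∑ b, (if a = i then (1:ℂ) else 0) * (if b = j then (1:ℂ) else 0) * cB r s i j * H a b) :=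
    fun a => Finset.sum_add_distrib
  rw [Finset.sum_congr rfl (fun a _ => split a), Finset.sum_add_distrib]
  congr 1
  · rw [sum2 _ j i (fun a b hF => by
      by_contra hc; apply hF
      rcases not_and_or.mp hc with h' | h' <;> simp [h'])]
    simp
  · rw [sum2 _ i j (fun a b hF => by
      by_contra hc; apply hF
      rcases not_and_or.mp hc with h' | h' <;> simp [h'])]
    simp

set_option linter.unusedTactic false in
lemma final (r s : ℂ) (i j k l m p : Fin n) :
    cA r s i j * ((if p = i then (1:ℂ) else 0) * cA r s i k * Rent r s j k l m
        + (if p = k then (1:ℂ) else 0) * cB r s i k * Rent r s j i l m)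
      + cB r s i j * ((if p = j then (1:ℂ) else 0) * cA r s j k * Rent r s i k l m
        + (if p = k then (1:ℂ) else 0) * cB r s j k * Rent r s i j l m)
    = cA r s j k * ((if l = k then (1:ℂ) else 0) * cA r s i k * Rent r s i j m p
        + (if l = i then (1:ℂ) else 0) * cB r s i k * Rent r s k j m p)
      + cB r s j k * ((if l = j then (1:ℂ) else 0) * cA r s i j * Rent r s i k m p
        + (if l = i then (1:ℂ) else 0) * cB r s i j * Rent r s j k m p) := by
  rcases lt_trichotomy i j with hij | rfl | hij
  · rcases lt_trichotomy i k with hik | rfl | hik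
    · rcases lt_trichotomy j k with hjk | rfl | hjk <;>
        first
          | (exfalso; omega)
          | (simp only [Rent]
             simp (disch := omega) only [cA_eq, cA_lt, cA_gt, cB_eq, cB_lt, cB_gt]
             ring)
    · first
          | (exfalso; omega)
          | (simp only [Rent]
             simp (disch := omega) only [cA_eq, cA_lt, cA_gt, cB_eq, cB_lt, cB_gt]
             ring)
    · rcases lt_trichotomy j k with hjk | rfl | hjk <;>
        first
          | (exfalso; omega)
          | (simp only [Rent]
             simp (disch := omega) only [cA_eq, cA_lt, cA_gt, cB_eq, cB_lt, cB_gt]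
             ring)
  · rcases lt_trichotomy i k with hik | rfl | hik <;>
      first
        | (exfalso; omega)
        | (simp only [Rent]
           simp (disch := omega) only [cA_eq, cA_lt, cA_gt, cB_eq, cB_lt, cB_gt]
           ring)
  · rcases lt_trichotomy i k with hik | rfl | hik
    · rcases lt_trichotomy j k with hjk | rfl | hjk <;>
        first
          | (exfalso; omega)
          | (simp only [Rent]
             simp (disch := omega) only [cA_eq, cA_lt, cA_gt, cB_eq, cB_lt, cB_gt]
             ring)
    · first
          | (exfalso; omega)
          | (simp only [Rent]
             simp (disch := omega) only [cA_eq, cA_lt, cA_gt, cB_eq, cB_lt, cB_gt]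
             ring)
    · rcases lt_trichotomy j k with hjk | rfl | hjk <;>
        first
          | (exfalso; omega)
          | (simp only [Rent]
             simp (disch := omega) only [cA_eq, cA_lt, cA_gt, cB_eq, cB_lt, cB_gt]
             ring)

lemma core (r s : ℂ) (i j k l m p : Fin n) :
    ∑ a : Fin n, ∑ b : Fin n, ∑ e : Fin n,
        Rent r s i j a b * (Rent r s b k e p * Rent r s a e l m)
    = ∑ b : Fin n, ∑ c : Fin n, ∑ e : Fin n,
        Rent r s j k b c * (Rent r s i b l e * Rent r s e c m p) := by
  have L : ∀ a b : Fin n, ∑ e : Fin n, Rent r s i j a b * (Rent r s b k e p * Rent r s a e l m)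
      = Rent r s i j a b * ∑ e : Fin n, Rent r s b k e p * Rent r s a e l m :=
    fun a b => (Finset.mul_sum _ _ _).symm
  have R : ∀ b c : Fin n, ∑ e : Fin n, Rent r s j k b c * (Rent r s i b l e * Rent r s e c m p)
      = Rent r s j k b c * ∑ e : Fin n, Rent r s i b l e * Rent r s e c m p :=
    fun b c => (Finset.mul_sum _ _ _).symm
  simp only [L, R, innerE, innerE2, outer2]
  exact final r s i j k l m p

set_option linter.unusedTactic false in
lemma heckeFinal (r s : ℂ) (p q u v : Fin n) :
    cA r s p q * Rent r s q p u v + cB r s p q * Rent r s p q u v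
      = (1 - r * s⁻¹) * Rent r s p q u v
        + (r * s⁻¹) * ((if u = p then (1:ℂ) else 0) * (if v = q then (1:ℂ) else 0)) := by
  rcases lt_trichotomy p q with h | rfl | h <;>
    first
      | (exfalso; omega)
      | (simp only [Rent]
         simp (disch := omega) only [cA_eq, cA_lt, cA_gt, cB_eq, cB_lt, cB_gt]
         ring)

lemma Rhat_mul_Rhat (r s : ℂ) :
    Rhat n r s * Rhat n r s = (1 - r * s⁻¹) • Rhat n r s + (r * s⁻¹) • 1 := by
  ext ⟨p, q⟩ ⟨u, v⟩
  rw [Matrix.mul_apply, Fintype.sum_prod_type]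
  simp only [Rhat_apply]
  rw [outer2 r s p q (fun c d => Rent r s c d u v), heckeFinal]
  rw [Matrix.add_apply, Matrix.smul_apply, Matrix.smul_apply, Rhat_apply, Matrix.one_apply]
  simp only [smul_eq_mul, Prod.mk.injEq]
  congr 1
  by_cases h1 : u = p <;> by_cases h2 : v = q <;> subst_eqs <;> split_ifs <;>
    first | ring1 | rfl | simp_all | (exfalso; omega)

lemma op01_apply (M : Matrix (Fin n × Fin n) (Fin n × Fin n) ℂ) (f g : Fin 3 → Fin n) :
    op2At n 3 M 0 1 f g = M (f 0, f 1) (g 0, g 1) * (if f 2 = g 2 then (1:ℂ) else 0) := by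
  have h : (Finset.univ \ ({0, 1} : Finset (Fin 3))) = {2} := by decide
  simp only [op2At, h, Finset.prod_singleton]

lemma op12_apply (M : Matrix (Fin n × Fin n) (Fin n × Fin n) ℂ) (f g : Fin 3 → Fin n) :
    op2At n 3 M 1 2 f g = M (f 1, f 2) (g 1, g 2) * (if f 0 = g 0 then (1:ℂ) else 0) := by
  have h : (Finset.univ \ ({1, 2} : Finset (Fin 3))) = {0} := by decide
  simp only [op2At, h, Finset.prod_singleton]

lemma sum_fn3 (F : (Fin 3 → Fin n) → ℂ) :
    ∑ h : Fin 3 → Fin n, F h = ∑ a : Fin n, ∑ b : Fin n, ∑ c : Fin n, F ![a, b, c] := by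
  rw [← Equiv.sum_comp
    ({ toFun := fun p => ![p.1, p.2.1, p.2.2]
       invFun := fun f => (f 0, f 1, f 2)
       left_inv := fun p => rfl
       right_inv := fun f => by funext i; fin_cases i <;> rfl } :
      (Fin n × Fin n × Fin n) ≃ (Fin 3 → Fin n)) F, Fintype.sum_prod_type]
  simp only [Fintype.sum_prod_type, Equiv.coe_fn_mk]
  rfl

lemma trip01 (M N P : Matrix (Fin n × Fin n) (Fin n × Fin n) ℂ) (f g : Fin 3 → Fin n) :
    (op2At n 3 M 0 1 * op2At n 3 N 1 2 * op2At n 3 P 0 1) f g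
      = ∑ a : Fin n, ∑ b : Fin n, ∑ e : Fin n,
          M (f 0, f 1) (a, b) * (N (b, f 2) (e, g 2) * P (a, e) (g 0, g 1)) := by
  simp only [Matrix.mul_apply, op01_apply, op12_apply, sum_fn3]
  dsimp +instances only [Matrix.cons_val_zero, Matrix.cons_val_one, Matrix.head_cons,
    Matrix.cons_val_two, Matrix.tail_cons]
  simp only [Matrix.cons_val_two, Matrix.tail_cons, Finset.sum_mul, Finset.mul_sum,
    mul_ite, ite_mul, mul_zero, zero_mul, mul_one, one_mul,
    Matrix.head_cons, Finset.sum_ite_irrel, Finset.sum_const_zero, Finset.sum_ite_eq,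
    Finset.sum_ite_eq', Finset.mem_univ, if_true]
  refine Finset.sum_congr rfl fun a _ => ?_
  rw [Finset.sum_comm]
  exact Finset.sum_congr rfl fun b _ => Finset.sum_congr rfl fun e _ => by ring

lemma trip12 (M N P : Matrix (Fin n × Fin n) (Fin n × Fin n) ℂ) (f g : Fin 3 → Fin n) :
    (op2At n 3 M 1 2 * op2At n 3 N 0 1 * op2At n 3 P 1 2) f g
      = ∑ b : Fin n, ∑ c : Fin n, ∑ e : Fin n,
          M (f 1, f 2) (b, c) * (N (f 0, b) (g 0, e) * P (e, c) (g 1, g 2)) := by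
  simp only [Matrix.mul_apply, op01_apply, op12_apply, sum_fn3]
  dsimp +instances only [Matrix.cons_val_zero, Matrix.cons_val_one, Matrix.head_cons,
    Matrix.cons_val_two, Matrix.tail_cons]
  simp only [Matrix.cons_val_two, Matrix.tail_cons, Finset.sum_mul, Finset.mul_sum,
    mul_ite, ite_mul, mul_zero, zero_mul, mul_one, one_mul,
    Matrix.head_cons, Finset.sum_ite_irrel, Finset.sum_const_zero, Finset.sum_ite_eq,
    Finset.sum_ite_eq', Finset.mem_univ, if_true]
  rw [Finset.sum_comm]
  conv_lhs => rw [Finset.sum_congr rfl fun c _ => (Finset.sum_comm : _)]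
  rw [Finset.sum_comm]
  exact Finset.sum_congr rfl fun b _ => Finset.sum_congr rfl fun c _ =>
    Finset.sum_congr rfl fun e _ => by ring

lemma op01_mul (M N : Matrix (Fin n × Fin n) (Fin n × Fin n) ℂ) :
    op2At n 3 M 0 1 * op2At n 3 N 0 1 = op2At n 3 (M * N) 0 1 := by
  ext f g
  simp only [Matrix.mul_apply, op01_apply, sum_fn3]
  simp only [Matrix.cons_val_zero, Matrix.cons_val_one, Matrix.head_cons,
    Matrix.cons_val_two, Matrix.tail_cons, Finset.sum_mul, Finset.mul_sum,
    mul_ite, ite_mul, mul_zero, zero_mul, mul_one, one_mul,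
    Finset.sum_ite_irrel, Finset.sum_const_zero, Finset.sum_ite_eq, Finset.sum_ite_eq',
    Finset.mem_univ, if_true, Fintype.sum_prod_type]

lemma op12_mul (M N : Matrix (Fin n × Fin n) (Fin n × Fin n) ℂ) :
    op2At n 3 M 1 2 * op2At n 3 N 1 2 = op2At n 3 (M * N) 1 2 := by
  ext f g
  simp only [Matrix.mul_apply, op12_apply, sum_fn3]
  dsimp +instances only [Matrix.cons_val_zero, Matrix.cons_val_one, Matrix.head_cons,
    Matrix.cons_val_two, Matrix.tail_cons]
  simp only [Matrix.cons_val_zero, Matrix.cons_val_one, Matrix.head_cons,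
    Matrix.cons_val_two, Matrix.tail_cons, Finset.sum_mul, Finset.mul_sum,
    mul_ite, ite_mul, mul_zero, zero_mul, mul_one, one_mul,
    Finset.sum_ite_irrel, Finset.sum_const_zero, Finset.sum_ite_eq, Finset.sum_ite_eq',
    Finset.mem_univ, if_true, Fintype.sum_prod_type]

lemma op2At_add (m : ℕ) (M N : Matrix (Fin n × Fin n) (Fin n × Fin n) ℂ) (a b : Fin m) :
    op2At n m (M + N) a b = op2At n m M a b + op2At n m N a b := by
  ext f g; simp [op2At, add_mul]

lemma op2At_smul (m : ℕ) (c : ℂ) (M : Matrix (Fin n × Fin n) (Fin n × Fin n) ℂ) (a b : Fin m) :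
    op2At n m (c • M) a b = c • op2At n m M a b := by
  ext f g; simp [op2At, Matrix.smul_apply, smul_eq_mul, mul_assoc]

lemma op01_one : op2At n 3 (1 : Matrix (Fin n × Fin n) (Fin n × Fin n) ℂ) 0 1 = 1 := by
  ext f g
  rw [op01_apply]
  by_cases hfg : f = g
  · subst hfg; simp [Matrix.one_apply]
  · have h : ¬(f 0 = g 0 ∧ f 1 = g 1 ∧ f 2 = g 2) := by
      rintro ⟨h0, h1, h2⟩; exact hfg (by funext i; fin_cases i <;> assumption)
    rw [Matrix.one_apply_ne hfg]
    simp only [Matrix.one_apply, Prod.mk.injEq]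
    split_ifs <;> simp_all

lemma op12_one : op2At n 3 (1 : Matrix (Fin n × Fin n) (Fin n × Fin n) ℂ) 1 2 = 1 := by
  ext f g
  rw [op12_apply]
  by_cases hfg : f = g
  · subst hfg; simp [Matrix.one_apply]
  · have h : ¬(f 0 = g 0 ∧ f 1 = g 1 ∧ f 2 = g 2) := by
      rintro ⟨h0, h1, h2⟩; exact hfg (by funext i; fin_cases i <;> assumption)
    rw [Matrix.one_apply_ne hfg]
    simp only [Matrix.one_apply, Prod.mk.injEq]
    split_ifs <;> simp_all

lemma braid (r s : ℂ) :
    op2At n 3 (Rhat n r s) 0 1 * op2At n 3 (Rhat n r s) 1 2 * op2At n 3 (Rhat n r s) 0 1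
      = op2At n 3 (Rhat n r s) 1 2 * op2At n 3 (Rhat n r s) 0 1
          * op2At n 3 (Rhat n r s) 1 2 := by
  ext f g
  rw [trip01, trip12]
  simp only [Rhat_apply]
  exact core r s (f 0) (f 1) (f 2) (g 0) (g 1) (g 2)

lemma RhatXY_decomp (r s x y : ℂ) (hs : s ≠ 0) (hy : y ≠ 0) (h : y - x ≠ 0) :
    RhatXY n r s x y = s • Rhat n r s + ((s - r) * x / (y - x)) • 1 := by
  rw [RhatXY, RhatZ_eq, smul_add, smul_smul, smul_smul]
  congr 2
  all_goals (field_simp; try ring)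

set_option maxHeartbeats 1600000 in
lemma assemble {N : Type*} [Fintype N] [DecidableEq N] (r s x y z : ℂ) (hs : s ≠ 0)
    (hyx : y - x ≠ 0) (hzx : z - x ≠ 0) (hzy : z - y ≠ 0)
    (A B : Matrix N N ℂ)
    (hbr : A * B * A = B * A * B)
    (hA : A * A = (1 - r * s⁻¹) • A + (r * s⁻¹) • 1)
    (hB : B * B = (1 - r * s⁻¹) • B + (r * s⁻¹) • 1) :
    (s • A + ((s - r) * x / (y - x)) • 1) * (s • B + ((s - r) * x / (z - x)) • 1) *
        (s • A + ((s - r) * y / (z - y)) • 1)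
      = (s • B + ((s - r) * y / (z - y)) • 1) * (s • A + ((s - r) * x / (z - x)) • 1) *
        (s • B + ((s - r) * x / (y - x)) • 1) := by
  simp only [add_mul, mul_add, smul_mul_assoc, mul_smul_comm, one_mul, mul_one, smul_smul,
    smul_add]
  rw [hbr, hA, hB]
  match_scalars <;> field_simp <;> ring

end YBaux

/-- **Yang-Baxter equation for the normalized R-matrix.** For pairwise distinct nonzero
`x, y, z ∈ ℂ`, `Ř_1(x,y) Ř_2(x,z) Ř_1(y,z) = Ř_2(y,z) Ř_1(x,z) Ř_2(x,y)` on `V ⊗ V ⊗ V`,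
where `Ř_1(x,y) = Ř(x,y) ⊗ Id` and `Ř_2(x,y) = Id ⊗ Ř(x,y)`. -/
theorem yang_baxter_normalized (n : ℕ) (hn : 1 ≤ n) (r s : ℂ) (hr : r ≠ 0) (hs : s ≠ 0)
    (x y z : ℂ) (hx : x ≠ 0) (hy : y ≠ 0) (hz : z ≠ 0)
    (hxy : x ≠ y) (hxz : x ≠ z) (hyz : y ≠ z) :
    op2At n 3 (RhatXY n r s x y) 0 1 * op2At n 3 (RhatXY n r s x z) 1 2 *
        op2At n 3 (RhatXY n r s y z) 0 1 =
      op2At n 3 (RhatXY n r s y z) 1 2 * op2At n 3 (RhatXY n r s x z) 0 1 *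
        op2At n 3 (RhatXY n r s x y) 1 2 := by
  have hyx : y - x ≠ 0 := sub_ne_zero.mpr (Ne.symm hxy)
  have hzx : z - x ≠ 0 := sub_ne_zero.mpr (Ne.symm hxz)
  have hzy : z - y ≠ 0 := sub_ne_zero.mpr (Ne.symm hyz)
  set M1 := op2At n 3 (Rhat n r s) 0 1 with hM1
  set M2 := op2At n 3 (Rhat n r s) 1 2 with hM2
  have d01 : ∀ u v : ℂ, v ≠ 0 → v - u ≠ 0 →
      op2At n 3 (RhatXY n r s u v) 0 1 = s • M1 + ((s - r) * u / (v - u)) • 1 := by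
    intro u v hv hvu
    rw [YBaux.RhatXY_decomp r s u v hs hv hvu, YBaux.op2At_add, YBaux.op2At_smul,
      YBaux.op2At_smul, YBaux.op01_one]
  have d12 : ∀ u v : ℂ, v ≠ 0 → v - u ≠ 0 →
      op2At n 3 (RhatXY n r s u v) 1 2 = s • M2 + ((s - r) * u / (v - u)) • 1 := by
    intro u v hv hvu
    rw [YBaux.RhatXY_decomp r s u v hs hv hvu, YBaux.op2At_add, YBaux.op2At_smul,
      YBaux.op2At_smul, YBaux.op12_one]
  rw [d01 x y hy hyx, d12 x z hz hzx, d01 y z hz hzy, d12 y z hz hzy, d01 x z hz hzx,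
    d12 x y hy hyx]
  have hM11 : M1 * M1 = (1 - r * s⁻¹) • M1 + (r * s⁻¹) • 1 := by
    rw [hM1, YBaux.op01_mul, YBaux.Rhat_mul_Rhat, YBaux.op2At_add, YBaux.op2At_smul,
      YBaux.op2At_smul, YBaux.op01_one]
  have hM22 : M2 * M2 = (1 - r * s⁻¹) • M2 + (r * s⁻¹) • 1 := by
    rw [hM2, YBaux.op12_mul, YBaux.Rhat_mul_Rhat, YBaux.op2At_add, YBaux.op2At_smul,
      YBaux.op2At_smul, YBaux.op12_one]
  exact YBaux.assemble r s x y z hs hyx hzx hzy M1 M2 (YBaux.braid r s) hM11 hM22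
end

section
/- The Jucys-Murphy operators Y_1, Y_2, …, Y_m on V^{⊗m} pairwise commute: Y_k Y_l = Y_l Y_k for all 1 ≤ k, l ≤ m. -/
open Matrix Kronecker BigOperators

/-- `Ř_k` (1-based index `k`, `1 ≤ k ≤ m−1`): the operator on `V^{⊗m}` acting as `Ř`
in the tensor factors `(k, k+1)` (1-based) and as the identity elsewhere.
(For out-of-range `k` it is defined to be the identity.) -/
noncomputable def Rop (n m : ℕ) (r s : ℂ) (k : ℕ) :
    Matrix (Fin m → Fin n) (Fin m → Fin n) ℂ :=
  if h : 1 ≤ k ∧ k < m then op2At n m (Rhat n r s) ⟨k - 1, by omega⟩ ⟨k, h.2⟩ else 1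

/-- The Jucys-Murphy operators on `V^{⊗m}` (1-based index):
`Y_1 = Id` and `Y_{k+1} = (s/r) Ř_k Y_k Ř_k`. -/
noncomputable def JM (n m : ℕ) (r s : ℂ) : ℕ → Matrix (Fin m → Fin n) (Fin m → Fin n) ℂ
  | 0 => 1
  | 1 => 1
  | (k + 2) => (s * r⁻¹) • (Rop n m r s (k + 1) * JM n m r s (k + 1) * Rop n m r s (k + 1))



noncomputable def Acoef (r s : ℂ) {n : ℕ} (a b : Fin n) : ℂ := if b < a then r else if a < b then s⁻¹ else 1
noncomputable def Bcoef (r s : ℂ) {n : ℕ} (a b : Fin n) : ℂ := if b < a then 1 - r * s⁻¹ else 0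

private lemma e1aux {n : ℕ} (a b x y : Fin n) :
    (∑ i : Fin n, if i = b then if i = y then if i = a then if i = x then (1:ℂ) else 0 else 0 else 0 else 0)
      = if b = y then if b = a then if b = x then (1:ℂ) else 0 else 0 else 0 := by
  rw [Finset.sum_eq_single b]
  · simp
  · intro i _ hib; simp [hib]
  · simp

private lemma e2aux {n : ℕ} (a b x y : Fin n) :
    (∑ i : Fin n, ∑ c : Fin n, if i < c then if i = b then if c = y then if c = a then if i = x then (1:ℂ) else 0 else 0 else 0 else 0 else 0)
      = if b < a then if a = y then if b = x then (1:ℂ) else 0 else 0 else 0 := by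
  rw [Finset.sum_eq_single b]
  · rw [Finset.sum_eq_single a]
    · split_ifs <;> simp_all
    · intro c _ hca; split_ifs <;> simp_all
    · simp
  · intro i _ hib; apply Finset.sum_eq_zero; intro c _; simp [hib]
  · simp

private lemma e3aux {n : ℕ} (a b x y : Fin n) :
    (∑ i : Fin n, ∑ c : Fin n, if i < c then if c = b then if i = y then if i = a then if c = x then (1:ℂ) else 0 else 0 else 0 else 0 else 0)
      = if a < b then if a = y then if b = x then (1:ℂ) else 0 else 0 else 0 := by
  rw [Finset.sum_eq_single a]
  · rw [Finset.sum_eq_single b]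
    · split_ifs <;> simp_all
    · intro c _ hcb; split_ifs <;> simp_all
    · simp
  · intro i _ hia; apply Finset.sum_eq_zero; intro c _; split_ifs <;> simp_all
  · simp

private lemma e4aux {n : ℕ} (a b x y : Fin n) :
    (∑ i : Fin n, ∑ c : Fin n, if i < c then if i = b then if i = y then if c = a then if c = x then (1:ℂ) else 0 else 0 else 0 else 0 else 0)
      = if b < a then if b = y then if a = x then (1:ℂ) else 0 else 0 else 0 := by
  rw [Finset.sum_eq_single b]
  · rw [Finset.sum_eq_single a]
    · split_ifs <;> simp_all
    · intro c _ hca; split_ifs <;> simp_all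
    · simp
  · intro i _ hib; apply Finset.sum_eq_zero; intro c _; simp [hib]
  · simp

set_option maxRecDepth 8000 in
lemma Rhat_apply_s16 (n : ℕ) (r s : ℂ) (a b x y : Fin n) :
    Rhat n r s (a, b) (x, y) =
      (if x = b ∧ y = a then Acoef r s a b else 0)
      + (if x = a ∧ y = b then Bcoef r s a b else 0) := by
  simp only [Rhat, Matrix.add_apply, Matrix.smul_apply, Matrix.sum_apply, smul_eq_mul,
    Matrix.kroneckerMap_apply, Matrix.single, Matrix.of_apply,
    apply_ite (fun M : Matrix (Fin n × Fin n) (Fin n × Fin n) ℂ => M (a,b) (x,y)),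
    Matrix.zero_apply, ite_mul, mul_ite, zero_mul, mul_zero, mul_one, one_mul, ite_and,
    Acoef, Bcoef]
  rw [e1aux a b x y, e2aux a b x y, e3aux a b x y, e4aux a b x y]
  rcases lt_trichotomy a b with h|h|h
  · simp only [h, h.ne, h.ne', lt_asymm h, if_true, if_false, mul_ite, mul_one, mul_zero]
    split_ifs <;> subst_vars <;> first
      | rfl | contradiction | ring | norm_num
      | (exact absurd rfl (by assumption))
      | (exact absurd (by assumption) (lt_irrefl _))
  · subst h
    simp only [lt_irrefl, if_false, if_true, mul_ite, mul_one, mul_zero]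
    split_ifs <;> subst_vars <;> first
      | rfl | contradiction | ring | norm_num
      | (exact absurd rfl (by assumption))
      | (exact absurd (by assumption) (lt_irrefl _))
  · simp only [h, h.ne, h.ne', lt_asymm h, if_true, if_false, mul_ite, mul_one, mul_zero]
    split_ifs <;> subst_vars <;> first
      | rfl | contradiction | ring | norm_num
      | (exact absurd rfl (by assumption))
      | (exact absurd (by assumption) (lt_irrefl _))


section aux
variable {n m : ℕ}

def upd2 (f : Fin m → Fin n) (a b : Fin m) (x y : Fin n) : Fin m → Fin n :=
  fun l => if l = a then x else if l = b then y else f l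

lemma upd2_a (f : Fin m → Fin n) (a b : Fin m) (x y : Fin n) : upd2 f a b x y a = x := by
  simp [upd2]

lemma upd2_b (f : Fin m → Fin n) {a b : Fin m} (hba : b ≠ a) (x y : Fin n) :
    upd2 f a b x y b = y := by simp [upd2, hba]

lemma upd2_other (f : Fin m → Fin n) {a b l : Fin m} (hla : l ≠ a) (hlb : l ≠ b)
    (x y : Fin n) : upd2 f a b x y l = f l := by simp [upd2, hla, hlb]

lemma op2At_mul_apply_disjoint (M N : Matrix (Fin n × Fin n) (Fin n × Fin n) ℂ)
    {a b c d : Fin m} (hab : a ≠ b) (hcd : c ≠ d) (hac : a ≠ c) (had : a ≠ d)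
    (hbc : b ≠ c) (hbd : b ≠ d) (f g : Fin m → Fin n) :
    (op2At n m M a b * op2At n m N c d) f g =
      M (f a, f b) (g a, g b) * N (f c, f d) (g c, g d) *
        ∏ l ∈ Finset.univ \ ({a, b, c, d} : Finset (Fin m)),
          (if f l = g l then (1:ℂ) else 0) := by
  rw [Matrix.mul_apply]
  rw [Finset.sum_eq_single (upd2 f a b (g a) (g b))]
  · simp only [op2At]
    rw [upd2_a, upd2_b f hab.symm, upd2_other f hac.symm hbc.symm,
        upd2_other f had.symm hbd.symm]
    have h1 : (∏ l ∈ Finset.univ \ ({a, b} : Finset (Fin m)),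
        (if f l = upd2 f a b (g a) (g b) l then (1:ℂ) else 0)) = 1 := by
      apply Finset.prod_eq_one
      intro l hl
      simp only [Finset.mem_sdiff, Finset.mem_insert, Finset.mem_singleton] at hl
      rw [upd2_other f (fun h => hl.2 (Or.inl h)) (fun h => hl.2 (Or.inr h))]
      simp
    have h2 : (∏ l ∈ Finset.univ \ ({c, d} : Finset (Fin m)),
        (if upd2 f a b (g a) (g b) l = g l then (1:ℂ) else 0)) =
        ∏ l ∈ Finset.univ \ ({a, b, c, d} : Finset (Fin m)),
          (if f l = g l then (1:ℂ) else 0) := by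
      have hsub : Finset.univ \ ({a, b, c, d} : Finset (Fin m)) ⊆
          Finset.univ \ ({c, d} : Finset (Fin m)) := by
        intro l hl
        simp only [Finset.mem_sdiff, Finset.mem_insert, Finset.mem_singleton] at *
        tauto
      have hone : ∀ l ∈ Finset.univ \ ({c, d} : Finset (Fin m)),
          l ∉ Finset.univ \ ({a, b, c, d} : Finset (Fin m)) →
          (if upd2 f a b (g a) (g b) l = g l then (1:ℂ) else 0) = 1 := by
        intro l hl hl2
        simp only [Finset.mem_sdiff, Finset.mem_insert, Finset.mem_singleton] at *
        have : l = a ∨ l = b := by tauto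
        rcases this with h | h <;> subst h
        · rw [upd2_a]; simp
        · rw [upd2_b f hab.symm]; simp
      rw [← Finset.prod_subset hsub hone]
      apply Finset.prod_congr rfl
      intro l hl
      simp only [Finset.mem_sdiff, Finset.mem_insert, Finset.mem_singleton] at hl
      rw [upd2_other f (fun h => hl.2 (Or.inl h)) (fun h => hl.2 (Or.inr (Or.inl h)))]
    rw [h1, h2]; ring
  · intro h _ hne
    obtain ⟨l, hl⟩ := Function.ne_iff.mp hne
    simp only [op2At]
    by_cases hla : l = a
    · subst hla
      rw [upd2_a] at hl
      have : (∏ l ∈ Finset.univ \ ({c, d} : Finset (Fin m)),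
          (if h l = g l then (1:ℂ) else 0)) = 0 := by
        apply Finset.prod_eq_zero (i := l) (by simp [hac, had]) (by simp [hl])
      rw [this]; ring
    · by_cases hlb : l = b
      · subst hlb
        rw [upd2_b f hab.symm] at hl
        have : (∏ l ∈ Finset.univ \ ({c, d} : Finset (Fin m)),
            (if h l = g l then (1:ℂ) else 0)) = 0 := by
          apply Finset.prod_eq_zero (i := l) (by simp [hbc, hbd]) (by simp [hl])
        rw [this]; ring
      · rw [upd2_other f hla hlb] at hl
        have : (∏ l ∈ Finset.univ \ ({a, b} : Finset (Fin m)),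
            (if f l = h l then (1:ℂ) else 0)) = 0 := by
          apply Finset.prod_eq_zero (i := l) (by simp [hla, hlb]) (by simp [Ne.symm hl])
        rw [this]; ring
  · simp

lemma op2At_comm_disjoint (M N : Matrix (Fin n × Fin n) (Fin n × Fin n) ℂ)
    {a b c d : Fin m} (hab : a ≠ b) (hcd : c ≠ d) (hac : a ≠ c) (had : a ≠ d)
    (hbc : b ≠ c) (hbd : b ≠ d) :
    op2At n m M a b * op2At n m N c d = op2At n m N c d * op2At n m M a b := by
  ext f g
  rw [op2At_mul_apply_disjoint M N hab hcd hac had hbc hbd,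
      op2At_mul_apply_disjoint N M hcd hab hac.symm hbc.symm had.symm hbd.symm]
  have : ({a, b, c, d} : Finset (Fin m)) = ({c, d, a, b} : Finset (Fin m)) := by
    ext l; simp; tauto
  rw [this]; ring
end aux


section aux3
variable {n m : ℕ}

noncomputable def lift12 {n : ℕ} (M : Matrix (Fin n × Fin n) (Fin n × Fin n) ℂ) :
    Matrix (Fin n × Fin n × Fin n) (Fin n × Fin n × Fin n) ℂ :=
  fun p q => M (p.1, p.2.1) (q.1, q.2.1) * (if p.2.2 = q.2.2 then 1 else 0)

noncomputable def lift23 {n : ℕ} (M : Matrix (Fin n × Fin n) (Fin n × Fin n) ℂ) :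
    Matrix (Fin n × Fin n × Fin n) (Fin n × Fin n × Fin n) ℂ :=
  fun p q => (if p.1 = q.1 then (1:ℂ) else 0) * M (p.2.1, p.2.2) (q.2.1, q.2.2)

noncomputable def op3At (n m : ℕ) (P : Matrix (Fin n × Fin n × Fin n) (Fin n × Fin n × Fin n) ℂ)
    (a b c : Fin m) : Matrix (Fin m → Fin n) (Fin m → Fin n) ℂ :=
  fun f g => P (f a, f b, f c) (g a, g b, g c) *
    ∏ l ∈ Finset.univ \ ({a, b, c} : Finset (Fin m)), (if f l = g l then (1:ℂ) else 0)

def upd3 (f : Fin m → Fin n) (a b c : Fin m) (x y z : Fin n) : Fin m → Fin n :=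
  fun l => if l = a then x else if l = b then y else if l = c then z else f l

lemma upd3_a (f : Fin m → Fin n) (a b c : Fin m) (x y z : Fin n) :
    upd3 f a b c x y z a = x := by simp [upd3]

lemma upd3_b (f : Fin m → Fin n) {a b c : Fin m} (hba : b ≠ a) (x y z : Fin n) :
    upd3 f a b c x y z b = y := by simp [upd3, hba]

lemma upd3_c (f : Fin m → Fin n) {a b c : Fin m} (hca : c ≠ a) (hcb : c ≠ b) (x y z : Fin n) :
    upd3 f a b c x y z c = z := by simp [upd3, hca, hcb]

lemma upd3_other (f : Fin m → Fin n) {a b c l : Fin m} (hla : l ≠ a) (hlb : l ≠ b)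
    (hlc : l ≠ c) (x y z : Fin n) : upd3 f a b c x y z l = f l := by simp [upd3, hla, hlb, hlc]

lemma op2At_eq_op3At_12 (M : Matrix (Fin n × Fin n) (Fin n × Fin n) ℂ)
    {a b c : Fin m} (hab : a ≠ b) (hac : a ≠ c) (hbc : b ≠ c) :
    op2At n m M a b = op3At n m (lift12 M) a b c := by
  ext f g
  simp only [op2At, op3At, lift12]
  have hset : Finset.univ \ ({a, b} : Finset (Fin m)) =
      insert c (Finset.univ \ ({a, b, c} : Finset (Fin m))) := by
    ext l
    by_cases h : l = c
    · subst h; simp [Ne.symm hac, Ne.symm hbc]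
    · simp only [Finset.mem_sdiff, Finset.mem_insert, Finset.mem_singleton, Finset.mem_univ,
        true_and, h]
      tauto
  rw [hset, Finset.prod_insert (by simp)]
  ring

lemma op2At_eq_op3At_23 (M : Matrix (Fin n × Fin n) (Fin n × Fin n) ℂ)
    {a b c : Fin m} (hab : a ≠ b) (hac : a ≠ c) (hbc : b ≠ c) :
    op2At n m M b c = op3At n m (lift23 M) a b c := by
  ext f g
  simp only [op2At, op3At, lift23]
  have hset : Finset.univ \ ({b, c} : Finset (Fin m)) =
      insert a (Finset.univ \ ({a, b, c} : Finset (Fin m))) := by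
    ext l
    by_cases h : l = a
    · subst h; simp [hab, hac]
    · simp only [Finset.mem_sdiff, Finset.mem_insert, Finset.mem_singleton, Finset.mem_univ,
        true_and, h]
      tauto
  rw [hset, Finset.prod_insert (by simp)]
  ring

lemma op3At_mul (P Q : Matrix (Fin n × Fin n × Fin n) (Fin n × Fin n × Fin n) ℂ)
    {a b c : Fin m} (hab : a ≠ b) (hac : a ≠ c) (hbc : b ≠ c) :
    op3At n m P a b c * op3At n m Q a b c = op3At n m (P * Q) a b c := by
  ext f g
  rw [Matrix.mul_apply]
  have himg : ∀ h : Fin m → Fin n,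
      h ∉ (Finset.univ : Finset (Fin n × Fin n × Fin n)).image
        (fun t => upd3 f a b c t.1 t.2.1 t.2.2) →
      op3At n m P a b c f h * op3At n m Q a b c h g = 0 := by
    intro h hh
    have : ∃ l, l ≠ a ∧ l ≠ b ∧ l ≠ c ∧ h l ≠ f l := by
      by_contra hcon
      push_neg at hcon
      apply hh
      rw [Finset.mem_image]
      refine ⟨(h a, h b, h c), Finset.mem_univ _, ?_⟩
      funext l
      by_cases hla : l = a
      · subst hla; rw [upd3_a]
      · by_cases hlb : l = b
        · subst hlb; rw [upd3_b f hab.symm]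
        · by_cases hlc : l = c
          · subst hlc; rw [upd3_c f hac.symm hbc.symm]
          · rw [upd3_other f hla hlb hlc]
            exact (hcon l hla hlb hlc).symm
    obtain ⟨l, hla, hlb, hlc, hl⟩ := this
    simp only [op3At]
    have : (∏ l ∈ Finset.univ \ ({a, b, c} : Finset (Fin m)),
        (if f l = h l then (1:ℂ) else 0)) = 0 := by
      apply Finset.prod_eq_zero (i := l) (by simp [hla, hlb, hlc]) (by simp [Ne.symm hl])
    rw [this]; ring
  rw [← Finset.sum_subset (Finset.subset_univ _) (fun h _ hh => himg h hh)]
  rw [Finset.sum_image (fun t _ t' _ htt => ?inj)]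
  case inj =>
    have h1 := congrFun htt a
    have h2 := congrFun htt b
    have h3 := congrFun htt c
    rw [upd3_a, upd3_a] at h1
    rw [upd3_b f hab.symm, upd3_b f hab.symm] at h2
    rw [upd3_c f hac.symm hbc.symm, upd3_c f hac.symm hbc.symm] at h3
    exact Prod.ext h1 (Prod.ext h2 h3)
  · simp only [op3At, op3At, Matrix.mul_apply]
    rw [Finset.sum_mul]
    apply Finset.sum_congr rfl
    intro t _
    rw [upd3_a, upd3_b f hab.symm, upd3_c f hac.symm hbc.symm]
    have h1 : (∏ l ∈ Finset.univ \ ({a, b, c} : Finset (Fin m)),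
        (if f l = upd3 f a b c t.1 t.2.1 t.2.2 l then (1:ℂ) else 0)) = 1 := by
      apply Finset.prod_eq_one
      intro l hl
      simp only [Finset.mem_sdiff, Finset.mem_insert, Finset.mem_singleton] at hl
      rw [upd3_other f (fun h => hl.2 (Or.inl h)) (fun h => hl.2 (Or.inr (Or.inl h)))
        (fun h => hl.2 (Or.inr (Or.inr h)))]
      simp
    have h2 : (∏ l ∈ Finset.univ \ ({a, b, c} : Finset (Fin m)),
        (if upd3 f a b c t.1 t.2.1 t.2.2 l = g l then (1:ℂ) else 0)) =
        ∏ l ∈ Finset.univ \ ({a, b, c} : Finset (Fin m)),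
          (if f l = g l then (1:ℂ) else 0) := by
      apply Finset.prod_congr rfl
      intro l hl
      simp only [Finset.mem_sdiff, Finset.mem_insert, Finset.mem_singleton] at hl
      rw [upd3_other f (fun h => hl.2 (Or.inl h)) (fun h => hl.2 (Or.inr (Or.inl h)))
        (fun h => hl.2 (Or.inr (Or.inr h)))]
    rw [h1, h2]
    ring
end aux3


noncomputable def pt {α : Type*} [DecidableEq α] (w : α → ℂ) (σ : α → α) : Matrix α α ℂ :=
  fun p q => w p * (if σ p = q then 1 else 0)

lemma pt_mul {α : Type*} [Fintype α] [DecidableEq α] (w1 w2 : α → ℂ) (σ1 σ2 : α → α) :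
    pt w1 σ1 * pt w2 σ2 = pt (fun p => w1 p * w2 (σ1 p)) (fun p => σ2 (σ1 p)) := by
  ext p q
  rw [Matrix.mul_apply, Finset.sum_eq_single (σ1 p)]
  · simp [pt]
  · intro j _ hj
    simp [pt, Ne.symm hj]
  · simp

section amatbmat
variable (n : ℕ) (r s : ℂ)

noncomputable def Amat : Matrix (Fin n × Fin n) (Fin n × Fin n) ℂ :=
  fun p q => Acoef r s p.1 p.2 * (if (p.2, p.1) = q then 1 else 0)
noncomputable def Bmat : Matrix (Fin n × Fin n) (Fin n × Fin n) ℂ :=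
  fun p q => Bcoef r s p.1 p.2 * (if p = q then 1 else 0)

lemma lift12_add (M N : Matrix (Fin n × Fin n) (Fin n × Fin n) ℂ) :
    lift12 (M + N) = lift12 M + lift12 N := by
  ext p q; simp only [lift12, Matrix.add_apply]; split_ifs <;> ring

lemma lift23_add (M N : Matrix (Fin n × Fin n) (Fin n × Fin n) ℂ) :
    lift23 (M + N) = lift23 M + lift23 N := by
  ext p q; simp only [lift23, Matrix.add_apply]; split_ifs <;> ring

lemma lift12_Amat : lift12 (Amat n r s) =
    pt (fun p => Acoef r s p.1 p.2.1) (fun p => (p.2.1, p.1, p.2.2)) := by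
  ext ⟨a, b, c⟩ ⟨x, y, z⟩
  simp only [lift12, pt, Amat]
  rw [mul_assoc]
  congr 1
  split_ifs
  all_goals (try ring1)
  all_goals (exfalso; simp only [Prod.ext_iff] at *; tauto)

lemma lift12_Bmat : lift12 (Bmat n r s) =
    pt (fun p => Bcoef r s p.1 p.2.1) (fun p => p) := by
  ext ⟨a, b, c⟩ ⟨x, y, z⟩
  simp only [lift12, pt, Bmat]
  rw [mul_assoc]
  congr 1
  split_ifs
  all_goals (try ring1)
  all_goals (exfalso; simp only [Prod.ext_iff] at *; tauto)

lemma lift23_Amat : lift23 (Amat n r s) =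
    pt (fun p => Acoef r s p.2.1 p.2.2) (fun p => (p.1, p.2.2, p.2.1)) := by
  ext ⟨a, b, c⟩ ⟨x, y, z⟩
  simp only [lift23, pt, Amat]
  rw [mul_comm (if a = x then (1:ℂ) else 0), mul_assoc]
  congr 1
  split_ifs
  all_goals (try ring1)
  all_goals (exfalso; simp only [Prod.ext_iff] at *; tauto)

lemma lift23_Bmat : lift23 (Bmat n r s) =
    pt (fun p => Bcoef r s p.2.1 p.2.2) (fun p => p) := by
  ext ⟨a, b, c⟩ ⟨x, y, z⟩
  simp only [lift23, pt, Bmat]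
  rw [mul_comm (if a = x then (1:ℂ) else 0), mul_assoc]
  congr 1
  split_ifs
  all_goals (try ring1)
  all_goals (exfalso; simp only [Prod.ext_iff] at *; tauto)
end amatbmat

variable {n : ℕ} {r s : ℂ}

lemma Acoef_of_lt {a b : Fin n} (h : a < b) : Acoef r s a b = s⁻¹ := by
  simp [Acoef, h, asymm h]
lemma Acoef_of_gt {a b : Fin n} (h : a < b) : Acoef r s b a = r := by
  simp [Acoef, h]
lemma Acoef_self (a : Fin n) : Acoef r s a a = 1 := by simp [Acoef]
lemma Bcoef_of_lt {a b : Fin n} (h : a < b) : Bcoef r s a b = 0 := by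
  simp [Bcoef, asymm h]
lemma Bcoef_of_gt {a b : Fin n} (h : a < b) : Bcoef r s b a = 1 - r * s⁻¹ := by
  simp [Bcoef, h]
lemma Bcoef_self (a : Fin n) : Bcoef r s a a = 0 := by simp [Bcoef]

lemma Rhat_eq (n : ℕ) (r s : ℂ) : Rhat n r s = Amat n r s + Bmat n r s := by
  ext ⟨a, b⟩ ⟨x, y⟩
  rw [Rhat_apply_s16, Matrix.add_apply]
  simp only [Amat, Bmat]
  split_ifs
  all_goals (try ring1)
  all_goals (exfalso; simp only [Prod.ext_iff] at *; tauto)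

lemma YBE3 (n : ℕ) (r s : ℂ) :
    lift12 (Rhat n r s) * lift23 (Rhat n r s) * lift12 (Rhat n r s)
      = lift23 (Rhat n r s) * lift12 (Rhat n r s) * lift23 (Rhat n r s) := by
  rw [Rhat_eq, lift12_add, lift23_add, lift12_Amat, lift12_Bmat, lift23_Amat, lift23_Bmat]
  simp only [Matrix.add_mul, Matrix.mul_add, pt_mul]
  ext ⟨a, b, c⟩ ⟨d, e, f⟩
  simp only [Matrix.add_apply, pt]
  rcases lt_trichotomy a b with hab|hab|hab
  · rcases lt_trichotomy b c with hbc|hbc|hbc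
    · have hac := hab.trans hbc
      simp only [Acoef_of_lt hab, Acoef_of_gt hab, Bcoef_of_lt hab, Bcoef_of_gt hab, Acoef_of_lt hbc, Acoef_of_gt hbc, Bcoef_of_lt hbc, Bcoef_of_gt hbc, Acoef_of_lt hac, Acoef_of_gt hac, Bcoef_of_lt hac, Bcoef_of_gt hac]; all_goals ring1
    · subst hbc
      simp only [Acoef_of_lt hab, Acoef_of_gt hab, Bcoef_of_lt hab, Bcoef_of_gt hab, Acoef_self, Bcoef_self]; all_goals ring1
    · rcases lt_trichotomy a c with hac|hac|hac
      · simp only [Acoef_of_lt hab, Acoef_of_gt hab, Bcoef_of_lt hab, Bcoef_of_gt hab, Acoef_of_lt hbc, Acoef_of_gt hbc, Bcoef_of_lt hbc, Bcoef_of_gt hbc, Acoef_of_lt hac, Acoef_of_gt hac, Bcoef_of_lt hac, Bcoef_of_gt hac]; all_goals ring1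
      · subst hac
        simp only [Acoef_of_lt hab, Acoef_of_gt hab, Bcoef_of_lt hab, Bcoef_of_gt hab, Acoef_of_lt hbc, Acoef_of_gt hbc, Bcoef_of_lt hbc, Bcoef_of_gt hbc, Acoef_self, Bcoef_self]; all_goals ring1
      · simp only [Acoef_of_lt hab, Acoef_of_gt hab, Bcoef_of_lt hab, Bcoef_of_gt hab, Acoef_of_lt hbc, Acoef_of_gt hbc, Bcoef_of_lt hbc, Bcoef_of_gt hbc, Acoef_of_lt hac, Acoef_of_gt hac, Bcoef_of_lt hac, Bcoef_of_gt hac]; all_goals ring1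
  · subst hab
    rcases lt_trichotomy a c with hac|hac|hac
    · simp only [Acoef_of_lt hac, Acoef_of_gt hac, Bcoef_of_lt hac, Bcoef_of_gt hac, Acoef_self, Bcoef_self]; all_goals ring1
    · subst hac
      simp only [Acoef_self, Bcoef_self]; all_goals ring1
    · simp only [Acoef_of_lt hac, Acoef_of_gt hac, Bcoef_of_lt hac, Bcoef_of_gt hac, Acoef_self, Bcoef_self]; all_goals ring1
  · rcases lt_trichotomy b c with hbc|hbc|hbc
    · rcases lt_trichotomy a c with hac|hac|hac
      · simp only [Acoef_of_lt hab, Acoef_of_gt hab, Bcoef_of_lt hab, Bcoef_of_gt hab, Acoef_of_lt hbc, Acoef_of_gt hbc, Bcoef_of_lt hbc, Bcoef_of_gt hbc, Acoef_of_lt hac, Acoef_of_gt hac, Bcoef_of_lt hac, Bcoef_of_gt hac]; all_goals ring1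
      · subst hac
        simp only [Acoef_of_lt hab, Acoef_of_gt hab, Bcoef_of_lt hab, Bcoef_of_gt hab, Acoef_of_lt hbc, Acoef_of_gt hbc, Bcoef_of_lt hbc, Bcoef_of_gt hbc, Acoef_self, Bcoef_self]; all_goals ring1
      · simp only [Acoef_of_lt hab, Acoef_of_gt hab, Bcoef_of_lt hab, Bcoef_of_gt hab, Acoef_of_lt hbc, Acoef_of_gt hbc, Bcoef_of_lt hbc, Bcoef_of_gt hbc, Acoef_of_lt hac, Acoef_of_gt hac, Bcoef_of_lt hac, Bcoef_of_gt hac]; all_goals ring1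
    · subst hbc
      simp only [Acoef_of_lt hab, Acoef_of_gt hab, Bcoef_of_lt hab, Bcoef_of_gt hab, Acoef_self, Bcoef_self]; all_goals ring1
    · have hac := hbc.trans hab
      simp only [Acoef_of_lt hab, Acoef_of_gt hab, Bcoef_of_lt hab, Bcoef_of_gt hab, Acoef_of_lt hbc, Acoef_of_gt hbc, Bcoef_of_lt hbc, Bcoef_of_gt hbc, Acoef_of_lt hac, Acoef_of_gt hac, Bcoef_of_lt hac, Bcoef_of_gt hac]; all_goals ring1


section braid
variable {n m : ℕ} {r s : ℂ}

lemma braid_word {α : Type*} [Monoid α] (A B X : α)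
    (hb : A * (B * A) = B * (A * B))
    (hc : B * X = X * B)
    (hi : A * (X * (A * X)) = X * (A * (X * A))) :
    B * (A * (X * (A * (B * (A * (X * A)))))) =
      A * (X * (A * (B * (A * (X * (A * B)))))) := by
  have hb' : ∀ t : α, A * (B * (A * t)) = B * (A * (B * t)) := fun t => by
    calc A * (B * (A * t)) = (A * (B * A)) * t := by simp only [mul_assoc]
    _ = (B * (A * B)) * t := by rw [hb]
    _ = B * (A * (B * t)) := by simp only [mul_assoc]
  have hc' : ∀ t : α, X * (B * t) = B * (X * t) := fun t => by
    calc X * (B * t) = (X * B) * t := by rw [mul_assoc]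
    _ = (B * X) * t := by rw [hc]
    _ = B * (X * t) := by rw [mul_assoc]
  have hi' : ∀ t : α, A * (X * (A * (X * t))) = X * (A * (X * (A * t))) := fun t => by
    calc A * (X * (A * (X * t))) = (A * (X * (A * X))) * t := by simp only [mul_assoc]
    _ = (X * (A * (X * A))) * t := by rw [hi]
    _ = X * (A * (X * (A * t))) := by simp only [mul_assoc]
  rw [hb' (X * A)]
  rw [hc' (A * (B * (X * A)))]
  rw [← hc' A]
  rw [← hb' (X * (A * (X * (B * A))))]
  rw [hi' (B * A)]
  rw [← hc' (A * (X * (A * (B * A))))]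
  rw [hb' (X * (A * B))]
  rw [← hc' (A * B)]
  rw [← hb]

lemma Rop_in_range (k : ℕ) (h1 : 1 ≤ k) (h2 : k < m) :
    Rop n m r s k = op2At n m (Rhat n r s) ⟨k - 1, by omega⟩ ⟨k, h2⟩ := by
  rw [Rop, dif_pos ⟨h1, h2⟩]

lemma Rop_out_range (k : ℕ) (h : ¬(1 ≤ k ∧ k < m)) : Rop n m r s k = 1 := by
  rw [Rop, dif_neg h]

lemma Rop_braid (k : ℕ) (h1 : 1 ≤ k) (h2 : k + 1 < m) :
    Rop n m r s k * Rop n m r s (k + 1) * Rop n m r s k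
      = Rop n m r s (k + 1) * Rop n m r s k * Rop n m r s (k + 1) := by
  have hk2 : k < m := by omega
  set a : Fin m := ⟨k - 1, by omega⟩ with ha
  set b : Fin m := ⟨k, hk2⟩ with hbdef
  set c : Fin m := ⟨k + 1, h2⟩ with hcdef
  have hab : a ≠ b := Fin.ne_of_val_ne (show k - 1 ≠ k by omega)
  have hac : a ≠ c := Fin.ne_of_val_ne (show k - 1 ≠ k + 1 by omega)
  have hbc : b ≠ c := Fin.ne_of_val_ne (show k ≠ k + 1 by omega)
  have e1 : Rop n m r s k = op3At n m (lift12 (Rhat n r s)) a b c := by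
    rw [Rop_in_range k h1 hk2, op2At_eq_op3At_12 _ hab hac hbc]
  have e2' : Rop n m r s (k + 1) = op2At n m (Rhat n r s) b c := by
    rw [Rop_in_range (k + 1) (by omega) h2]
    congr 1
  have e2 : Rop n m r s (k + 1) = op3At n m (lift23 (Rhat n r s)) a b c := by
    rw [e2', op2At_eq_op3At_23 _ hab hac hbc]
  rw [e1, e2, op3At_mul _ _ hab hac hbc, op3At_mul _ _ hab hac hbc,
    op3At_mul _ _ hab hac hbc, op3At_mul _ _ hab hac hbc, YBE3]

lemma Rop_comm_far (j k : ℕ) (h : j + 2 ≤ k) :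
    Rop n m r s j * Rop n m r s k = Rop n m r s k * Rop n m r s j := by
  by_cases h1 : 1 ≤ j ∧ j < m
  · by_cases h2 : 1 ≤ k ∧ k < m
    · rw [Rop_in_range j h1.1 h1.2, Rop_in_range k h2.1 h2.2]
      apply op2At_comm_disjoint <;> simp [Fin.ext_iff] <;> omega
    · rw [Rop_out_range k h2, mul_one, one_mul]
  · rw [Rop_out_range j h1, mul_one, one_mul]

lemma JM_succ (k : ℕ) (hk : 1 ≤ k) :
    JM n m r s (k + 1) = (s * r⁻¹) • (Rop n m r s k * JM n m r s k * Rop n m r s k) := by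
  match k, hk with
  | (j + 1), _ => rfl

lemma commute_Rop_JM (j : ℕ) (hj : 1 ≤ j) :
    ∀ k, j + 1 ≤ k → Commute (Rop n m r s k) (JM n m r s j) := by
  induction j, hj using Nat.le_induction with
  | base => exact fun k _ => Commute.one_right _
  | succ j hj ih =>
    intro k hk
    rw [JM_succ j hj]
    apply Commute.smul_right
    have hR : Commute (Rop n m r s k) (Rop n m r s j) :=
      (Rop_comm_far j k (by omega)).symm
    exact (hR.mul_right (ih k (by omega))).mul_right hR

lemma JM_swap (k : ℕ) (hk : 1 ≤ k) :
    Rop n m r s k * JM n m r s k * Rop n m r s k * JM n m r s k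
      = JM n m r s k * (Rop n m r s k * JM n m r s k * Rop n m r s k) := by
  induction k, hk using Nat.le_induction with
  | base => show Rop n m r s 1 * 1 * Rop n m r s 1 * 1 = 1 * (Rop n m r s 1 * 1 * Rop n m r s 1); simp
  | succ j hj ih =>
    by_cases hm' : j + 1 < m
    · set A := Rop n m r s j with hA
      set B := Rop n m r s (j + 1) with hB
      set X := JM n m r s j with hX
      have hY : JM n m r s (j + 1) = (s * r⁻¹) • (A * X * A) := JM_succ j hj
      have hb : A * (B * A) = B * (A * B) := by
        have := Rop_braid (n := n) (m := m) (r := r) (s := s) j hj hm'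
        rw [← hA, ← hB] at this
        calc A * (B * A) = A * B * A := by rw [mul_assoc]
        _ = B * A * B := this
        _ = B * (A * B) := by rw [mul_assoc]
      have hc : B * X = X * B := commute_Rop_JM j hj (j + 1) (le_refl _)
      have hi : A * (X * (A * X)) = X * (A * (X * A)) := by
        have := ih
        calc A * (X * (A * X)) = A * X * A * X := by simp only [mul_assoc]
        _ = X * (A * X * A) := ih
        _ = X * (A * (X * A)) := by simp only [mul_assoc]
      rw [hY]
      simp only [Matrix.smul_mul, Matrix.mul_smul, smul_smul, mul_assoc]
      exact congrArg (HSMul.hSMul (s * (r⁻¹ * (s * r⁻¹)))) (braid_word A B X hb hc hi)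
    · rw [JM_succ j hj, Rop_out_range (j + 1) (by omega)]
      simp

end braid

lemma JM_comm_lt {n m : ℕ} {r s : ℂ} (l : ℕ) (hl : 1 ≤ l) :
    ∀ k, l + 1 ≤ k → Commute (JM n m r s k) (JM n m r s l) := by
  intro k hk
  induction k, hk using Nat.le_induction with
  | base =>
    rw [JM_succ l hl]
    exact Commute.smul_left (JM_swap l hl) _
  | succ k hk ih =>
    have hk1 : 1 ≤ k := by omega
    rw [JM_succ k hk1]
    have hR : Commute (Rop n m r s k) (JM n m r s l) := commute_Rop_JM l hl k (by omega)
    exact Commute.smul_left ((hR.mul_left ih).mul_left hR) _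

/-- **Jucys-Murphy operators pairwise commute.** `Y_k Y_l = Y_l Y_k` on `V^{⊗m}` for all
`1 ≤ k, l ≤ m`. -/
theorem JM_commute (n : ℕ) (hn : 1 ≤ n) (r s : ℂ) (hr : r ≠ 0) (hs : s ≠ 0)
    (m : ℕ) (hm : 2 ≤ m) (k l : ℕ) (hk1 : 1 ≤ k) (hk2 : k ≤ m)
    (hl1 : 1 ≤ l) (hl2 : l ≤ m) :
    JM n m r s k * JM n m r s l = JM n m r s l * JM n m r s k := by
  rcases lt_trichotomy k l with h | h | h
  · exact ((JM_comm_lt k hk1 l h).symm).eq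
  · subst h; rfl
  · exact (JM_comm_lt l hl1 k h).eq
end
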